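/- Let H be a c-intersecting hypergraph partitioned into nonempty parts H_i and H_j (i ≠ j) with |H_i| > 2c and |H_j| > 2c, where every edge of H_i is disjoint from every edge of H_j outside a distinguished set V₀ (i.e., any intersection of an edge of H_i with an edge of H_j lies in V₀). Let ε₁ ∈ (0,1/2] and let T_i (resp. T_j) be the vertices of V₀ with degree > ε₁|H_i| in H_i^{V₀} (resp. > ε₁|H_j| in H_j^{V₀}). If T_i ∩ T_j = ∅, then the edges of H_i^{V₀} contained in T_i number at most c, or the edges of H_j^{V₀} contained in T_j number at most c. -/
import Mathlib


/-- If a c-intersecting hypergraph is partitioned into Hi, Hj (each with more than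
2c edges) whose cross intersections lie in V₀, and the high-trace-degree vertex
sets Ti, Tj are disjoint, then the trace edges inside Ti number at most c,
or those inside Tj do. -/
theorem stmt6 {V : Type*} [Fintype V] [DecidableEq V] (c : ℕ)
    (H Hi Hj : Finset (Finset V)) (V₀ : Finset V) (ε₁ : ℝ)
    (hint : ∀ A ∈ H, (H.filter fun B => B ≠ A ∧ A ∩ B = ∅).card ≤ c)
    (hpart : Hi ∪ Hj = H) (hdisj : Disjoint Hi Hj)
    (hiNe : Hi.Nonempty) (hjNe : Hj.Nonempty)
    (hic : 2 * c < Hi.card) (hjc : 2 * c < Hj.card)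
    (hV0 : ∀ A ∈ Hi, ∀ B ∈ Hj, A ∩ B ⊆ V₀)
    (hε0 : 0 < ε₁) (hε1 : ε₁ ≤ 1 / 2)
    (Ti Tj : Finset V)
    (hTi : Ti = V₀.filter fun v =>
      ε₁ * (Hi.card : ℝ) < ((Hi.filter fun A => v ∈ A).card : ℝ))
    (hTj : Tj = V₀.filter fun v =>
      ε₁ * (Hj.card : ℝ) < ((Hj.filter fun A => v ∈ A).card : ℝ))
    (hTT : Ti ∩ Tj = ∅) :
    (Hi.filter fun A => A ∩ V₀ ⊆ Ti).card ≤ c ∨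
    (Hj.filter fun A => A ∩ V₀ ⊆ Tj).card ≤ c := by
  by_contra h
  push_neg at h
  obtain ⟨h1, h2⟩ := h
  obtain ⟨A, hA⟩ := Finset.card_pos.mp (Nat.lt_of_le_of_lt (Nat.zero_le c) h1)
  rw [Finset.mem_filter] at hA
  obtain ⟨hAi, hAT⟩ := hA
  have hAH : A ∈ H := by rw [← hpart]; exact Finset.mem_union_left _ hAi
  have hsub : (Hj.filter fun B => B ∩ V₀ ⊆ Tj) ⊆
      H.filter fun B => B ≠ A ∧ A ∩ B = ∅ := by
    intro B hB
    rw [Finset.mem_filter] at hB ⊢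
    obtain ⟨hBj, hBT⟩ := hB
    refine ⟨by rw [← hpart]; exact Finset.mem_union_right _ hBj, ?_, ?_⟩
    · rintro rfl
      exact (Finset.disjoint_left.mp hdisj hAi) hBj
    · rw [Finset.eq_empty_iff_forall_notMem]
      intro x hx
      rw [Finset.mem_inter] at hx
      have hxV : x ∈ V₀ := hV0 A hAi B hBj (Finset.mem_inter.mpr hx)
      have hxTi : x ∈ Ti := hAT (Finset.mem_inter.mpr ⟨hx.1, hxV⟩)
      have hxTj : x ∈ Tj := hBT (Finset.mem_inter.mpr ⟨hx.2, hxV⟩)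
      have : x ∈ Ti ∩ Tj := Finset.mem_inter.mpr ⟨hxTi, hxTj⟩
      rw [hTT] at this
      exact Finset.notMem_empty x this
  exact absurd (le_trans (Finset.card_le_card hsub) (hint A hAH)) (not_le.mpr h2)
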